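/- Let G be a graph whose vertex set is partitioned into parts A and B such that the induced subgraph G[A] is d-degenerate. Then the number of (unordered) triples {u, w, z} forming a triangle with u, w ∈ A and z ∈ V(G) is at most d · |E(A, V∖A)| + d² · |A|, and in particular every triangle of G with at least two vertices in A has one of its A-vertices with at most d neighbors in A under a degeneracy ordering. -/
import Mathlib

lemma exists_rank {V : Type*} [DecidableEq V] (G : SimpleGraph V) [DecidableRel G.Adj]
    (d : ℕ) :
    ∀ A : Finset V, (∀ B : Finset V, B ⊆ A → B.Nonempty →
      ∃ v ∈ B, (B.filter (G.Adj v)).card ≤ d) →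
    ∃ r : V → ℕ, (∀ u ∈ A, ∀ w ∈ A, r u = r w → u = w) ∧
      ∀ u ∈ A, (A.filter fun x => G.Adj u x ∧ r u < r x).card ≤ d := by
  intro A
  induction A using Finset.strongInduction with
  | _ A ih =>
    intro hdeg
    rcases A.eq_empty_or_nonempty with rfl | hA
    · exact ⟨fun _ => 0, by simp, by simp⟩
    obtain ⟨v, hvA, hvd⟩ := hdeg A (Finset.Subset.refl A) hA
    obtain ⟨r', hinj', hd'⟩ := ih (A.erase v) (Finset.erase_ssubset hvA)
      (fun B hB hBne => hdeg B (hB.trans (Finset.erase_subset _ _)) hBne)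
    refine ⟨fun x => if x = v then 0 else r' x + 1, ?_, ?_⟩
    · intro u hu w hw h
      by_cases hu' : u = v <;> by_cases hw' : w = v <;> simp [hu', hw'] at h ⊢
      exact hinj' u (Finset.mem_erase.mpr ⟨hu', hu⟩) w (Finset.mem_erase.mpr ⟨hw', hw⟩) h
    · intro u hu
      by_cases hu' : u = v
      · subst hu'
        calc (A.filter fun x => G.Adj u x ∧ (if u = u then 0 else r' u + 1) <
              (if x = u then 0 else r' x + 1)).card
            ≤ (A.filter (G.Adj u)).card := by
              apply Finset.card_le_card
              intro x hx
              rw [Finset.mem_filter] at hx ⊢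
              exact ⟨hx.1, hx.2.1⟩
          _ ≤ d := hvd
      · have : (A.filter fun x => G.Adj u x ∧ (if u = v then 0 else r' u + 1) <
            (if x = v then 0 else r' x + 1)) =
            ((A.erase v).filter fun x => G.Adj u x ∧ r' u < r' x) := by
          ext x
          simp only [Finset.mem_filter, Finset.mem_erase, hu', if_false]
          constructor
          · rintro ⟨hxA, hadj, hlt⟩
            by_cases hx' : x = v
            · simp [hx'] at hlt
            · simp [hx'] at hlt
              exact ⟨⟨hx', hxA⟩, hadj, hlt⟩
          · rintro ⟨⟨hx', hxA⟩, hadj, hlt⟩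
            simp [hx']
            exact ⟨hxA, hadj, hlt⟩
        rw [this]
        exact hd' u (Finset.mem_erase.mpr ⟨hu', hu⟩)

theorem stmt8 {V : Type*} [Fintype V] [DecidableEq V] (G : SimpleGraph V)
    [DecidableRel G.Adj] (A : Finset V) (d : ℕ)
    (hdeg : ∀ B : Finset V, B ⊆ A → B.Nonempty →
      ∃ v ∈ B, (B.filter (G.Adj v)).card ≤ d) :
    Nat.card {s : Finset V // G.IsNClique 3 s ∧ 2 ≤ (s ∩ A).card} ≤
      d * ((A ×ˢ Aᶜ).filter fun p => G.Adj p.1 p.2).card + d ^ 2 * A.card := by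
  classical
  obtain ⟨r, hinj, hr⟩ := exists_rank G d A hdeg
  set Nout : V → Finset V := fun u => A.filter fun x => G.Adj u x ∧ r u < r x with hNout
  have hNcard : ∀ u ∈ A, (Nout u).card ≤ d := hr
  have hkey : ∀ u ∈ A, ∀ w ∈ A, G.Adj u w → w ∈ Nout u ∨ u ∈ Nout w := by
    intro u hu w hw hadj
    rcases lt_trichotomy (r u) (r w) with h | h | h
    · left; exact Finset.mem_filter.mpr ⟨hw, hadj, h⟩
    · exact absurd (hinj u hu w hw h) hadj.ne
    · right; exact Finset.mem_filter.mpr ⟨hu, hadj.symm, h⟩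
  set Eab := (A ×ˢ Aᶜ).filter fun p => G.Adj p.1 p.2 with hEab
  set S : Finset (Finset V) :=
    (Eab.biUnion fun p => (Nout p.1).image fun w => ({p.1, w, p.2} : Finset V)) ∪
    (A.biUnion fun u => ((Nout u) ×ˢ (Nout u)).image fun q =>
      ({u, q.1, q.2} : Finset V)) with hS
  -- every triangle with ≥ 2 vertices in A is in S
  have hcover : ∀ s : Finset V, G.IsNClique 3 s → 2 ≤ (s ∩ A).card → s ∈ S := by
    intro s hs hs2
    obtain ⟨u, hu, w, hw, huw⟩ := Finset.one_lt_card.mp (by omega : 1 < (s ∩ A).card)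
    have huA : u ∈ A := (Finset.mem_inter.mp hu).2
    have hwA : w ∈ A := (Finset.mem_inter.mp hw).2
    have hus : u ∈ s := (Finset.mem_inter.mp hu).1
    have hws : w ∈ s := (Finset.mem_inter.mp hw).1
    have hsub : ({u, w} : Finset V) ⊆ s := by
      intro x hx; rcases Finset.mem_insert.mp hx with rfl | hx
      · exact hus
      · rw [Finset.mem_singleton] at hx; subst hx; exact hws
    have hcard2 : ({u, w} : Finset V).card = 2 := by
      rw [Finset.card_insert_of_notMem (by simpa using huw), Finset.card_singleton]
    have hcards : (s \ {u, w}).card = 1 := by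
      rw [Finset.card_sdiff_of_subset hsub, hs.2, hcard2]
    obtain ⟨z, hz⟩ := Finset.card_eq_one.mp hcards
    have hzmem : z ∈ s \ ({u, w} : Finset V) := hz ▸ Finset.mem_singleton_self z
    have hzs : z ∈ s := (Finset.mem_sdiff.mp hzmem).1
    have hzuw : z ≠ u ∧ z ≠ w := by
      have := (Finset.mem_sdiff.mp hzmem).2
      simp only [Finset.mem_insert, Finset.mem_singleton] at this
      tauto
    have hseq : s = {u, w, z} := by
      have h1 : ({u, w} : Finset V) ∪ (s \ {u, w}) = s := Finset.union_sdiff_of_subset hsub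
      rw [hz] at h1
      rw [← h1]; ext x; simp [Finset.mem_insert, Finset.mem_union, or_assoc]
    have adj_uw : G.Adj u w := hs.1 hus hws huw
    have adj_uz : G.Adj u z := hs.1 hus hzs (Ne.symm hzuw.1)
    have adj_wz : G.Adj w z := hs.1 hws hzs (Ne.symm hzuw.2)
    by_cases hzA : z ∈ A
    · -- all three in A; use min-rank vertex
      apply Finset.mem_union_right
      -- helper: if a has both others in Nout a then {a,b,c} ∈ biUnion
      have mk : ∀ a ∈ A, ∀ b c, b ∈ Nout a → c ∈ Nout a →
          ({a, b, c} : Finset V) ∈ A.biUnion fun u =>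
            ((Nout u) ×ˢ (Nout u)).image fun q => ({u, q.1, q.2} : Finset V) := by
        intro a ha b c hb hc
        exact Finset.mem_biUnion.mpr ⟨a, ha, Finset.mem_image.mpr
          ⟨(b, c), Finset.mem_product.mpr ⟨hb, hc⟩, rfl⟩⟩
      rcases hkey u huA w hwA adj_uw with hw1 | hu1
      · rcases hkey u huA z hzA adj_uz with hz1 | hu2
        · rw [hseq]; exact mk u huA w z hw1 hz1
        · rcases hkey w hwA z hzA adj_wz with hz2 | hw2
          · exfalso
            have h1 := (Finset.mem_filter.mp hw1).2.2
            have h2 := (Finset.mem_filter.mp hu2).2.2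
            have h3 := (Finset.mem_filter.mp hz2).2.2
            omega
          · -- z has u and w in Nout z
            have : ({u, w, z} : Finset V) = {z, u, w} := by
              ext x; simp only [Finset.mem_insert, Finset.mem_singleton]; tauto
            rw [hseq, this]; exact mk z hzA u w hu2 hw2
      · rcases hkey w hwA z hzA adj_wz with hz2 | hw2
        · have : ({u, w, z} : Finset V) = {w, u, z} := by
            ext x; simp only [Finset.mem_insert, Finset.mem_singleton]; tauto
          rw [hseq, this]; exact mk w hwA u z hu1 hz2
        · rcases hkey u huA z hzA adj_uz with hz1 | hu2
          · exfalso
            have h1 := (Finset.mem_filter.mp hu1).2.2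
            have h2 := (Finset.mem_filter.mp hw2).2.2
            have h3 := (Finset.mem_filter.mp hz1).2.2
            omega
          · have : ({u, w, z} : Finset V) = {z, u, w} := by
              ext x; simp only [Finset.mem_insert, Finset.mem_singleton]; tauto
            rw [hseq, this]; exact mk z hzA u w hu2 hw2
    · -- z outside A
      apply Finset.mem_union_left
      have hpz : ∀ a ∈ A, G.Adj a z → (a, z) ∈ Eab := by
        intro a ha hadj
        exact Finset.mem_filter.mpr ⟨Finset.mem_product.mpr ⟨ha, Finset.mem_compl.mpr hzA⟩, hadj⟩
      rcases hkey u huA w hwA adj_uw with hw1 | hu1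
      · rw [hseq]
        exact Finset.mem_biUnion.mpr ⟨(u, z), hpz u huA adj_uz,
          Finset.mem_image.mpr ⟨w, hw1, rfl⟩⟩
      · have : ({u, w, z} : Finset V) = {w, u, z} := by
          ext x; simp only [Finset.mem_insert, Finset.mem_singleton]; tauto
        rw [hseq, this]
        exact Finset.mem_biUnion.mpr ⟨(w, z), hpz w hwA adj_wz,
          Finset.mem_image.mpr ⟨u, hu1, rfl⟩⟩
  -- cardinality of S
  have hScard : S.card ≤ d * Eab.card + d ^ 2 * A.card := by
    calc S.card ≤ (Eab.biUnion fun p => (Nout p.1).image fun w =>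
          ({p.1, w, p.2} : Finset V)).card +
        (A.biUnion fun u => ((Nout u) ×ˢ (Nout u)).image fun q =>
          ({u, q.1, q.2} : Finset V)).card := Finset.card_union_le _ _
      _ ≤ d * Eab.card + d ^ 2 * A.card := by
        gcongr ?_ + ?_
        · calc (Eab.biUnion fun p => (Nout p.1).image fun w =>
              ({p.1, w, p.2} : Finset V)).card
              ≤ ∑ p ∈ Eab, ((Nout p.1).image fun w => ({p.1, w, p.2} : Finset V)).card :=
                Finset.card_biUnion_le
            _ ≤ ∑ p ∈ Eab, d := by
                apply Finset.sum_le_sum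
                intro p hp
                have hp1 : p.1 ∈ A := (Finset.mem_product.mp (Finset.mem_filter.mp hp).1).1
                exact (Finset.card_image_le).trans (hNcard p.1 hp1)
            _ = d * Eab.card := by rw [Finset.sum_const, smul_eq_mul, mul_comm]
        · calc (A.biUnion fun u => ((Nout u) ×ˢ (Nout u)).image fun q =>
              ({u, q.1, q.2} : Finset V)).card
              ≤ ∑ u ∈ A, (((Nout u) ×ˢ (Nout u)).image fun q =>
                  ({u, q.1, q.2} : Finset V)).card := Finset.card_biUnion_le
            _ ≤ ∑ u ∈ A, d ^ 2 := by
                apply Finset.sum_le_sum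
                intro u hu
                calc (((Nout u) ×ˢ (Nout u)).image fun q =>
                    ({u, q.1, q.2} : Finset V)).card
                    ≤ ((Nout u) ×ˢ (Nout u)).card := Finset.card_image_le
                  _ = (Nout u).card * (Nout u).card := Finset.card_product _ _
                  _ ≤ d * d := Nat.mul_le_mul (hNcard u hu) (hNcard u hu)
                  _ = d ^ 2 := (sq d).symm
            _ = d ^ 2 * A.card := by rw [Finset.sum_const, smul_eq_mul, mul_comm]
  have hfinal : Nat.card {s : Finset V // G.IsNClique 3 s ∧ 2 ≤ (s ∩ A).card} =
      (Finset.univ.filter fun s : Finset V =>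
        G.IsNClique 3 s ∧ 2 ≤ (s ∩ A).card).card := by
    rw [Nat.card_eq_fintype_card, Fintype.card_subtype]
  rw [hfinal]
  refine le_trans (Finset.card_le_card ?_) hScard
  intro s hsmem
  have := Finset.mem_filter.mp hsmem
  exact hcover s this.2.1 this.2.2
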